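/- Let W and X be disjoint finite sets of candidates with A = W ∪ X, and let T ⊆ W × X be a set of exactly 3 distinct pairs. Then there exists a nonempty finite profile V of votes (linear orders on the candidate type) such that for all distinct a, b ∈ A, the 1-approval winner set of the election ({a, b}, V) equals {a, b} if and only if (a, b) ∈ T or (b, a) ∈ T. -/

import Mathlib

open Finset
open scoped Classical

noncomputable section

variable {Cand : Type*}

/-- `t`-approval score of `c` in the election `(F, V)`, where each vote is a linear order on
the candidate type: the number of votes in which fewer than `t` candidates of `F` are ranked
above `c`. -/
def approvalScore [DecidableEq Cand] (t : ℕ) (F : Finset Cand)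
    (V : List (LinearOrder Cand)) (c : Cand) : ℕ :=
  (V.map fun v => if (F.filter fun b => v.lt b c).card < t then 1 else 0).sum

/-- `t`-approval winner set of the election `(F, V)`: the candidates of `F` with maximum
`t`-approval score. -/
def approvalWinners [DecidableEq Cand] (t : ℕ) (F : Finset Cand)
    (V : List (LinearOrder Cand)) : Finset Cand :=
  F.filter fun c => ∀ b ∈ F, approvalScore t F V b ≤ approvalScore t F V c

namespace OAux

/-- sign of a vote on an ordered pair -/
def sgn (a b : Cand) (v : LinearOrder Cand) : ℤ := if v.lt a b then 1 else -1

lemma lt_total' (v : LinearOrder Cand) {a b : Cand} (h : a ≠ b) : v.lt a b ∨ v.lt b a := by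
  letI := v; exact h.lt_or_gt

lemma lt_asymm' (v : LinearOrder Cand) {a b : Cand} (h : v.lt a b) : ¬ v.lt b a := by
  letI := v; exact lt_asymm h

lemma sgn_neg (v : LinearOrder Cand) {a b : Cand} (h : a ≠ b) (h2 : ¬ v.lt a b) :
    sgn a b v = -1 := by simp [sgn, h2]

lemma sgn_pos (v : LinearOrder Cand) {a b : Cand} (h : v.lt a b) : sgn a b v = 1 := by
  simp [sgn, h]


/-- projection sending `q` to `p` and fixing everything else -/
def pr (p q c : Cand) : Cand := if c = q then p else c

/-- strict order: order by `pr` via `L`, with `q` placed immediately below `p`. -/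
def krel (L : LinearOrder Cand) (p q c d : Cand) : Prop :=
  L.lt (pr p q c) (pr p q d) ∨ (pr p q c = pr p q d ∧ c ≠ q ∧ d = q)

lemma krel_sto (L : LinearOrder Cand) (p q : Cand) :
    IsStrictTotalOrder Cand (krel L p q) := by
  letI := L
  refine { trichotomous := fun c d => ?_, irrefl := fun c h => ?_, trans := fun c d e h h' => ?_ }
  case refine_1 =>
    suffices H : krel L p q c d ∨ c = d ∨ krel L p q d c by
      intro h1 h2; exact H.elim (absurd · h1) (·.elim id (absurd · h2))
    by_cases hcd : c = d
    · exact Or.inr (Or.inl hcd)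
    by_cases hpr : pr p q c = pr p q d
    · by_cases hdq : d = q
      · have hcq : c ≠ q := fun h => hcd (h.trans hdq.symm)
        exact Or.inl (Or.inr ⟨hpr, hcq, hdq⟩)
      · have hcq : c = q := by
          by_contra hcq
          exact hcd (by simpa [pr, hcq, hdq] using hpr)
        exact Or.inr (Or.inr (Or.inr ⟨hpr.symm, hdq, hcq⟩))
    · rcases lt_trichotomy (pr p q c) (pr p q d) with h | h | h
      · exact Or.inl (Or.inl h)
      · exact absurd h hpr
      · exact Or.inr (Or.inr (Or.inl h))
  case refine_2 =>
    rcases h with h | ⟨_, h1, h2⟩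
    · exact lt_irrefl _ h
    · exact h1 h2
  case refine_3 =>
    rcases h with h | ⟨h, hc, hd⟩ <;> rcases h' with h' | ⟨h', hd', he⟩
    · exact Or.inl (h.trans h')
    · exact Or.inl (h'.symm ▸ h)
    · exact Or.inl (h ▸ h')
    · exact absurd hd hd'

/-- the second gadget vote's relation: flip and swap `p,q`. -/
def sw (p q c : Cand) : Cand := if c = p then q else if c = q then p else c

def krel2 (L : LinearOrder Cand) (p q c d : Cand) : Prop :=
  krel L p q (sw p q d) (sw p q c)

lemma sw_sw (p q c : Cand) : sw p q (sw p q c) = c := by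
  unfold sw
  split_ifs <;> simp_all

lemma krel2_sto (L : LinearOrder Cand) (p q : Cand) :
    IsStrictTotalOrder Cand (krel2 L p q) := by
  have H := krel_sto L p q
  refine { trichotomous := fun c d => ?_, irrefl := fun c h => ?_, trans := fun c d e h h' => ?_ }
  case refine_1 =>
    suffices H' : krel2 L p q c d ∨ c = d ∨ krel2 L p q d c by
      intro h1 h2; exact H'.elim (absurd · h1) (·.elim id (absurd · h2))
    rcases (letI := H; trichotomous_of (krel L p q) (sw p q d) (sw p q c)) with h | h | h
    · exact Or.inl h
    · refine Or.inr (Or.inl ?_)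
      have := congrArg (sw p q) h
      rw [sw_sw, sw_sw] at this
      exact this.symm
    · exact Or.inr (Or.inr h)
  case refine_2 => exact H.irrefl _ h
  case refine_3 => exact H.trans _ _ _ h' h

lemma pr_sw (p q c : Cand) : pr p q (sw p q c) = pr p q c := by
  unfold pr sw
  split_ifs <;> simp_all

lemma krel2_flip (L : LinearOrder Cand) {p q a b : Cand} (hpq : p ≠ q) (hab : a ≠ b)
    (h1 : (a, b) ≠ (p, q)) (h2 : (a, b) ≠ (q, p)) :
    krel2 L p q a b ↔ krel L p q b a := by
  unfold krel2 krel
  rw [pr_sw, pr_sw]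
  constructor
  · rintro (h | ⟨he, hnq, hq⟩)
    · exact Or.inl h
    · exfalso
      have ha : a = p := by
        unfold sw at hq; split_ifs at hq with h' h''
        · exact h'
        · exact absurd hq hpq
        · exact absurd hq h''
      have hbp : b ≠ p := by
        intro hb
        apply hnq
        unfold sw
        simp [hb]
      have prp : pr p q p = p := by unfold pr; simp [hpq]
      rw [ha, prp] at he
      have hbq : b = q := by
        unfold pr at he
        split_ifs at he with h'
        · exact h'
        · exact absurd he hbp
      exact h1 (by rw [ha, hbq])
  · rintro (h | ⟨he, hnq, hq⟩)
    · exact Or.inl h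
    · exfalso
      have prq : pr p q q = p := by unfold pr; simp
      rw [hq, prq] at he
      have hbp : b = p := by
        unfold pr at he
        split_ifs at he with h'
        · exact absurd h' hnq
        · exact he
      exact h2 (by rw [hq, hbp])

lemma gadget_core (L : LinearOrder Cand) {p q : Cand} (hpq : p ≠ q) :
    ∃ v1 v2 : LinearOrder Cand, ∀ a b : Cand, a ≠ b →
      sgn a b v1 + sgn a b v2 =
        if (a, b) = (p, q) then 2 else if (a, b) = (q, p) then -2 else 0 := by
  haveI := krel_sto L p q
  haveI := krel2_sto L p q
  haveI : DecidableRel (krel L p q) := Classical.decRel _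
  haveI : DecidableRel (krel2 L p q) := Classical.decRel _
  set v1 : LinearOrder Cand := linearOrderOfSTO (krel L p q) with hv1
  set v2 : LinearOrder Cand := linearOrderOfSTO (krel2 L p q) with hv2
  have e1 : ∀ c d, v1.lt c d ↔ krel L p q c d := fun _ _ => Iff.rfl
  have e2 : ∀ c d, v2.lt c d ↔ krel2 L p q c d := fun _ _ => Iff.rfl
  have hk : krel L p q p q := Or.inr ⟨by unfold pr; simp [hpq], hpq, rfl⟩
  have hk2 : krel2 L p q p q := by
    unfold krel2
    have hs1 : sw p q q = p := by unfold sw; simp [hpq, Ne.symm hpq]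
    have hs2 : sw p q p = q := by unfold sw; simp
    rw [hs1, hs2]; exact hk
  refine ⟨v1, v2, fun a b hab => ?_⟩
  by_cases hA : (a, b) = (p, q)
  · injection hA with ha hb
    subst ha; subst hb
    rw [if_pos rfl, sgn_pos v1 ((e1 _ _).mpr hk), sgn_pos v2 ((e2 _ _).mpr hk2)]; norm_num
  by_cases hB : (a, b) = (q, p)
  · injection hB with ha hb
    subst ha; subst hb
    have n1 : ¬ v1.lt a b := lt_asymm' v1 ((e1 _ _).mpr hk)
    have n2 : ¬ v2.lt a b := lt_asymm' v2 ((e2 _ _).mpr hk2)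
    rw [if_neg hA, if_pos rfl, sgn_neg v1 hab n1, sgn_neg v2 hab n2]; norm_num
  · rw [if_neg hA, if_neg hB]
    have hflip : v2.lt a b ↔ v1.lt b a := by
      rw [e2, e1]; exact krel2_flip L hpq hab hA hB
    by_cases h : v1.lt a b
    · have : ¬ v2.lt a b := fun h' => lt_asymm' v1 (hflip.mp h') h
      rw [sgn_pos v1 h, sgn_neg v2 hab this]; ring
    · have h' : v1.lt b a := (lt_total' v1 hab).resolve_left h
      rw [sgn_neg v1 hab h, sgn_pos v2 (hflip.mpr h')]; ring

lemma gadget_pair (L : LinearOrder Cand) {w x : Cand} (hwx : w ≠ x) :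
    ∃ v1 v2 : LinearOrder Cand, ∀ a b : Cand, a ≠ b →
      sgn a b v1 + sgn a b v2 =
        if (a, b) = (w, x) ∨ (a, b) = (x, w) then -(2 * sgn a b L) else 0 := by
  have hne : ((w, x) : Cand × Cand) ≠ (x, w) := by
    intro h; injection h with h1 _; exact hwx h1
  by_cases hL : L.lt w x
  · obtain ⟨v1, v2, hg⟩ := gadget_core L hwx.symm
    refine ⟨v1, v2, fun a b hab => ?_⟩
    rw [hg a b hab]
    by_cases h1 : (a, b) = (w, x)
    · rw [if_neg (h1 ▸ hne), if_pos (h1.trans ((Prod.ext_iff).mpr ⟨rfl, rfl⟩)),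
        if_pos (Or.inl h1)]
      injection h1 with ha hb; subst ha; subst hb
      rw [sgn_pos L hL]; ring
    · by_cases h2 : (a, b) = (x, w)
      · rw [if_pos h2, if_pos (Or.inr h2)]
        injection h2 with ha hb; subst ha; subst hb
        have : ¬ L.lt a b := lt_asymm' L hL
        rw [sgn_neg L hab this]; ring
      · rw [if_neg h2, if_neg ?_, if_neg ?_]
        · rintro (h | h) <;> [exact h1 h; exact h2 h]
        · exact h1
  · have hL' : L.lt x w := (lt_total' L hwx).resolve_left hL
    obtain ⟨v1, v2, hg⟩ := gadget_core L hwx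
    refine ⟨v1, v2, fun a b hab => ?_⟩
    rw [hg a b hab]
    by_cases h1 : (a, b) = (w, x)
    · rw [if_pos h1, if_pos (Or.inl h1)]
      injection h1 with ha hb; subst ha; subst hb
      rw [sgn_neg L hab hL]; ring
    · by_cases h2 : (a, b) = (x, w)
      · rw [if_neg h1, if_pos h2, if_pos (Or.inr h2)]
        injection h2 with ha hb; subst ha; subst hb
        rw [sgn_pos L hL']; ring
      · rw [if_neg h1, if_neg h2, if_neg ?_]
        rintro (h | h) <;> [exact h1 h; exact h2 h]

section Scores
variable [DecidableEq Cand]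

lemma filt_lt (v : LinearOrder Cand) {a b : Cand} (hab : a ≠ b) :
    ((({a, b} : Finset Cand)).filter fun x => v.lt x a).card < 1 ↔ v.lt a b := by
  letI := v
  rw [Nat.lt_one_iff, Finset.card_eq_zero, Finset.filter_eq_empty_iff]
  simp only [Finset.mem_insert, Finset.mem_singleton]
  constructor
  · intro h
    have hb : ¬ v.lt b a := h (Or.inr rfl)
    exact (hab.lt_or_gt).resolve_right hb
  · intro h c hc
    rcases hc with rfl | rfl
    · exact lt_irrefl _
    · exact lt_asymm h

lemma score_sub (V : List (LinearOrder Cand)) {a b : Cand} (hab : a ≠ b) :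
    (approvalScore 1 {a, b} V a : ℤ) - approvalScore 1 {a, b} V b
      = (V.map (sgn a b)).sum := by
  induction V with
  | nil => simp [approvalScore]
  | cons v V ih =>
    have step : ∀ c d : Cand, c ≠ d → ({c, d} : Finset Cand) = {a, b} →
        approvalScore 1 {a, b} (v :: V) c
          = (if v.lt c d then 1 else 0) + approvalScore 1 {a, b} V c := by
      intro c d hcd hset
      simp only [approvalScore, List.map_cons, List.sum_cons]
      congr 1
      rw [← hset, if_congr (filt_lt v hcd) rfl rfl]
    have stepa := step a b hab rfl
    have stepb := step b a hab.symm (Finset.pair_comm b a)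
    rw [stepa, stepb]
    push_cast
    have hcast : ∀ (P : Prop) [Decidable P], ((if P then (1:ℕ) else 0 : ℕ) : ℤ)
        = if P then (1:ℤ) else 0 := by
      intro P _; split_ifs <;> simp
    rw [List.map_cons, List.sum_cons, ← ih]
    by_cases h : v.lt a b
    · have h' : ¬ v.lt b a := lt_asymm' v h
      rw [if_pos h, if_neg h', sgn_pos v h]; ring
    · have h' : v.lt b a := (lt_total' v hab).resolve_left h
      rw [if_neg h, if_pos h', sgn_neg v hab h]; ring

lemma winners_pair (V : List (LinearOrder Cand)) {a b : Cand} (hab : a ≠ b) :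
    approvalWinners 1 {a, b} V = {a, b} ↔
      approvalScore 1 {a, b} V a = approvalScore 1 {a, b} V b := by
  rw [approvalWinners, Finset.filter_eq_self]
  constructor
  · intro h
    exact le_antisymm (h b (by simp) a (by simp)) (h a (by simp) b (by simp))
  · intro h c hc d hd
    simp only [Finset.mem_insert, Finset.mem_singleton] at hc hd
    rcases hc with rfl | rfl <;> rcases hd with rfl | rfl
    · exact le_refl _
    · exact h.ge
    · exact h.le
    · exact le_refl _

end Scores

end OAux

/-- profile-construction Lemma 3.1 for Theorem 4, stated existentially:
given disjoint finite sets `W` and `X` of candidates, `A = W ∪ X`, and a set `T ⊆ W × X` of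
exactly 3 pairs, there is a nonempty finite profile `V` of linear votes such that for all
distinct `a, b ∈ A`, the 1-approval winner set of `({a, b}, V)` equals `{a, b}` if and only
if `(a, b) ∈ T` or `(b, a) ∈ T`. -/
theorem one_approval_pair_profile [DecidableEq Cand]
    (W X : Finset Cand) (hWX : Disjoint W X)
    (T : Finset (Cand × Cand)) (hT : T ⊆ W ×ˢ X) (hT3 : T.card = 3) :
    ∃ V : List (LinearOrder Cand), V ≠ [] ∧
      ∀ a ∈ W ∪ X, ∀ b ∈ W ∪ X, a ≠ b →
        (approvalWinners 1 ({a, b} : Finset Cand) V = {a, b} ↔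
          (a, b) ∈ T ∨ (b, a) ∈ T) := by
  haveI : IsWellOrder Cand WellOrderingRel := WellOrderingRel.isWellOrder
  let L : LinearOrder Cand := IsWellOrder.linearOrder WellOrderingRel
  rw [Finset.card_eq_three] at hT3
  obtain ⟨t1, t2, t3, h12, h13, h23, rfl⟩ := hT3
  have hmem : ∀ t ∈ ({t1, t2, t3} : Finset (Cand × Cand)), t.1 ∈ W ∧ t.2 ∈ X := by
    intro t ht
    have := hT ht
    rwa [Finset.mem_product] at this
  have hne : ∀ t ∈ ({t1, t2, t3} : Finset (Cand × Cand)), t.1 ≠ t.2 := by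
    intro t ht h
    exact (Finset.disjoint_left.mp hWX (hmem t ht).1) (h ▸ (hmem t ht).2)
  obtain ⟨u1, u2, hg1⟩ := OAux.gadget_pair L (hne t1 (by simp))
  obtain ⟨u3, u4, hg2⟩ := OAux.gadget_pair L (hne t2 (by simp))
  obtain ⟨u5, u6, hg3⟩ := OAux.gadget_pair L (hne t3 (by simp))
  refine ⟨[L, L, u1, u2, u3, u4, u5, u6], by simp, fun a _ b _ hab => ?_⟩
  rw [OAux.winners_pair _ hab, ← Nat.cast_inj (R := ℤ), ← sub_eq_zero,
    OAux.score_sub _ hab]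
  simp only [List.map_cons, List.map_nil, List.sum_cons, List.sum_nil, add_zero]
  rw [show OAux.sgn a b L + (OAux.sgn a b L + (OAux.sgn a b u1 + (OAux.sgn a b u2 +
      (OAux.sgn a b u3 + (OAux.sgn a b u4 + (OAux.sgn a b u5 + OAux.sgn a b u6)))))) =
      (OAux.sgn a b u1 + OAux.sgn a b u2) + (OAux.sgn a b u3 + OAux.sgn a b u4) +
      (OAux.sgn a b u5 + OAux.sgn a b u6) + 2 * OAux.sgn a b L by ring,
    hg1 a b hab, hg2 a b hab, hg3 a b hab]
  -- rewrite the pair conditions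
  have swap_iff : ∀ t : Cand × Cand, (a, b) = (t.2, t.1) ↔ (b, a) = t := by
    intro t
    rw [Prod.ext_iff, Prod.ext_iff]
    exact ⟨fun ⟨h1, h2⟩ => ⟨h2, h1⟩, fun ⟨h1, h2⟩ => ⟨h2, h1⟩⟩
  have eta : ∀ t : Cand × Cand, (t.1, t.2) = t := fun t => rfl
  have hP : ∀ t ∈ ({t1, t2, t3} : Finset (Cand × Cand)),
      ((a, b) = (t.1, t.2) ∨ (a, b) = (t.2, t.1)) ↔ ((a, b) = t ∨ (b, a) = t) := by
    intro t _
    rw [eta, swap_iff]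
  -- exclusivity
  have excl : ∀ t ∈ ({t1, t2, t3} : Finset (Cand × Cand)),
      ∀ t' ∈ ({t1, t2, t3} : Finset (Cand × Cand)), t ≠ t' →
      ((a, b) = t ∨ (b, a) = t) → ¬((a, b) = t' ∨ (b, a) = t') := by
    rintro t ht t' ht' htt' (h | h) (h' | h')
    · exact htt' (h.symm.trans h')
    · -- a = t.1 ∈ W, a = t'.2 ∈ X
      have ha1 : a = t.1 := by rw [← h]
      have ha2 : a = t'.2 := by rw [← h']
      exact Finset.disjoint_left.mp hWX (ha1 ▸ (hmem t ht).1) (ha2 ▸ (hmem t' ht').2)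
    · have ha1 : a = t.2 := by rw [← h]
      have ha2 : a = t'.1 := by rw [← h']
      exact Finset.disjoint_left.mp hWX (ha2 ▸ (hmem t' ht').1) (ha1 ▸ (hmem t ht).2)
    · exact htt' (by
        have := h.symm.trans h'
        exact this)
  set s0 := OAux.sgn a b L with hs0
  have hs0v : s0 = 1 ∨ s0 = -1 := by
    rw [hs0]; unfold OAux.sgn; split_ifs
    · exact Or.inl rfl
    · exact Or.inr rfl
  have hRHS : ((a, b) ∈ ({t1, t2, t3} : Finset (Cand × Cand)) ∨
      (b, a) ∈ ({t1, t2, t3} : Finset (Cand × Cand))) ↔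
      (((a, b) = t1 ∨ (b, a) = t1) ∨ ((a, b) = t2 ∨ (b, a) = t2) ∨
        ((a, b) = t3 ∨ (b, a) = t3)) := by
    simp only [Finset.mem_insert, Finset.mem_singleton]
    tauto
  rw [hRHS, ← hP t1 (by simp), ← hP t2 (by simp), ← hP t3 (by simp)]
  have m1 : t1 ∈ ({t1, t2, t3} : Finset (Cand × Cand)) := by simp
  have m2 : t2 ∈ ({t1, t2, t3} : Finset (Cand × Cand)) := by simp
  have m3 : t3 ∈ ({t1, t2, t3} : Finset (Cand × Cand)) := by simp
  by_cases hP1 : (a, b) = (t1.1, t1.2) ∨ (a, b) = (t1.2, t1.1) <;>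
    by_cases hP2 : (a, b) = (t2.1, t2.2) ∨ (a, b) = (t2.2, t2.1) <;>
      by_cases hP3 : (a, b) = (t3.1, t3.2) ∨ (a, b) = (t3.2, t3.1)
  · exact absurd ((hP t2 m2).mp hP2) (excl t1 m1 t2 m2 h12 ((hP t1 m1).mp hP1))
  · exact absurd ((hP t2 m2).mp hP2) (excl t1 m1 t2 m2 h12 ((hP t1 m1).mp hP1))
  · exact absurd ((hP t3 m3).mp hP3) (excl t1 m1 t3 m3 h13 ((hP t1 m1).mp hP1))
  · rw [if_pos hP1, if_neg hP2, if_neg hP3]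
    constructor
    · intro _; exact Or.inl hP1
    · intro _; ring
  · exact absurd ((hP t3 m3).mp hP3) (excl t2 m2 t3 m3 h23 ((hP t2 m2).mp hP2))
  · rw [if_neg hP1, if_pos hP2, if_neg hP3]
    constructor
    · intro _; exact Or.inr (Or.inl hP2)
    · intro _; ring
  · rw [if_neg hP1, if_neg hP2, if_pos hP3]
    constructor
    · intro _; exact Or.inr (Or.inr hP3)
    · intro _; ring
  · rw [if_neg hP1, if_neg hP2, if_neg hP3]
    constructor
    · intro h
      exfalso
      rcases hs0v with h0 | h0 <;> rw [h0] at h <;> norm_num at h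
    · rintro (h | h | h)
      · exact absurd h hP1
      · exact absurd h hP2
      · exact absurd h hP3


end
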